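/- Let γ > 0 with γ ≠ 1, let P ∈ (0,1) and c > 0, and let u_γ(x) = (x^{1−γ} − 1)/(1−γ). Define p'_γ = P^{1/γ} / (P^{1/γ} + (1−P)^{1/γ}). Then the function p' ↦ P·u_γ(p'·c) + (1−P)·u_γ((1−p')·c) on (0,1) attains its unique maximum at p' = p'_γ: for every p' ∈ (0,1) with p' ≠ p'_γ the value at p' is strictly smaller than at p'_γ; and the maximum value equals (c^{1−γ}·(P^{1/γ} + (1−P)^{1/γ})^{γ} − 1)/(1−γ). In particular the maximized function is again a positive affine transformation of u_γ, so isoelastic utilities are invariant under the Bellman (instrumentalisation) operator of the double-or-nothing gamble. -/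

import Mathlib

open Real

/-- Bernoulli-type strict inequality for negative exponents. -/
lemma bern_neg {x α : ℝ} (hx : 0 < x) (hx1 : x ≠ 1) (hα : α < 0) :
    1 + α * (x - 1) < x ^ α := by
  rcases le_or_gt (1 + α * (x - 1)) 0 with h | h
  · exact h.trans_lt (rpow_pos_of_pos hx α)
  · rw [rpow_def_of_pos hx, ← exp_log h]
    apply exp_lt_exp.mpr
    have h1 : Real.log (1 + α * (x - 1)) ≤ α * (x - 1) := by
      have := log_le_sub_one_of_pos h; linarith
    have h2 : α * (x - 1) < α * Real.log x := by
      have := log_lt_sub_one_of_pos hx hx1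
      nlinarith
    linarith

/-- tangent line strict bound, concave case 0 < α < 1 -/
lemma tangent_lt {x x₀ α : ℝ} (hx : 0 < x) (hx₀ : 0 < x₀) (hne : x ≠ x₀)
    (h0 : 0 < α) (h1 : α < 1) :
    x ^ α < x₀ ^ α + α * x₀ ^ (α - 1) * (x - x₀) := by
  have hs : -1 ≤ x / x₀ - 1 := by
    have : 0 < x / x₀ := div_pos hx hx₀; linarith
  have hs' : x / x₀ - 1 ≠ 0 := by
    intro h
    exact hne (by field_simp at h; linarith)
  have hb := rpow_one_add_lt_one_add_mul_self hs hs' h0 h1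
  have key : (1 + (x / x₀ - 1)) ^ α = x ^ α / x₀ ^ α := by
    rw [show 1 + (x / x₀ - 1) = x / x₀ by ring, div_rpow hx.le hx₀.le]
  rw [key] at hb
  have hx₀α : 0 < x₀ ^ α := rpow_pos_of_pos hx₀ _
  rw [div_lt_iff₀ hx₀α] at hb
  calc x ^ α < (1 + α * (x / x₀ - 1)) * x₀ ^ α := hb
    _ = x₀ ^ α + α * (x₀ ^ α / x₀) * (x - x₀) := by field_simp
    _ = x₀ ^ α + α * x₀ ^ (α - 1) * (x - x₀) := by rw [rpow_sub_one hx₀.ne']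

/-- tangent line strict bound, convex case α < 0 -/
lemma tangent_gt {x x₀ α : ℝ} (hx : 0 < x) (hx₀ : 0 < x₀) (hne : x ≠ x₀)
    (hα : α < 0) :
    x₀ ^ α + α * x₀ ^ (α - 1) * (x - x₀) < x ^ α := by
  have hd : 0 < x / x₀ := div_pos hx hx₀
  have hd1 : x / x₀ ≠ 1 := by
    intro h; exact hne (by field_simp at h; linarith)
  have hb := bern_neg hd hd1 hα
  have key : (x / x₀) ^ α = x ^ α / x₀ ^ α := div_rpow hx.le hx₀.le α
  rw [key] at hb
  have hx₀α : 0 < x₀ ^ α := rpow_pos_of_pos hx₀ _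
  rw [lt_div_iff₀ hx₀α] at hb
  calc x₀ ^ α + α * x₀ ^ (α - 1) * (x - x₀)
      = (1 + α * (x / x₀ - 1)) * x₀ ^ α := by
        rw [rpow_sub_one hx₀.ne']; field_simp
    _ < x ^ α := hb

/-- w * (w^(1/γ)/S)^β = w^(1+β/γ) * S^(-β) -/
lemma w_x0 {w S γ : ℝ} (hw : 0 < w) (hS : 0 < S) (hγ : γ ≠ 0) (β : ℝ) :
    w * (w ^ (1/γ) / S) ^ β = w ^ (1 + β/γ) * S ^ (-β) := by
  rw [div_rpow (rpow_nonneg hw.le _) hS.le, ← Real.rpow_mul hw.le, rpow_neg hS.le]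
  rw [show w * (w ^ (1/γ * β) / S ^ β) = w ^ (1:ℝ) * w ^ (1/γ * β) * (S ^ β)⁻¹ by
    rw [rpow_one]; ring, ← rpow_add hw]
  ring_nf

theorem stmt_16 (γ : ℝ) (hγ : 0 < γ) (hγ1 : γ ≠ 1)
    (P : ℝ) (hP : P ∈ Set.Ioo (0:ℝ) 1) (c : ℝ) (hc : 0 < c)
    (u : ℝ → ℝ) (hu : ∀ x, u x = (x ^ (1 - γ) - 1) / (1 - γ))
    (pγ : ℝ) (hpγ : pγ = P ^ (1/γ) / (P ^ (1/γ) + (1 - P) ^ (1/γ))) :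
    pγ ∈ Set.Ioo (0:ℝ) 1 ∧
    (∀ p' ∈ Set.Ioo (0:ℝ) 1, p' ≠ pγ →
      P * u (p' * c) + (1 - P) * u ((1 - p') * c)
        < P * u (pγ * c) + (1 - P) * u ((1 - pγ) * c)) ∧
    P * u (pγ * c) + (1 - P) * u ((1 - pγ) * c)
      = (c ^ (1 - γ) * (P ^ (1/γ) + (1 - P) ^ (1/γ)) ^ γ - 1) / (1 - γ) := by
  obtain ⟨hP0, hP1⟩ := hP
  have hQ0 : 0 < 1 - P := by linarith
  set S : ℝ := P ^ (1/γ) + (1 - P) ^ (1/γ) with hSdef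
  have hA : 0 < P ^ (1/γ) := rpow_pos_of_pos hP0 _
  have hB : 0 < (1 - P) ^ (1/γ) := rpow_pos_of_pos hQ0 _
  have hS : 0 < S := by positivity
  have hpγ0 : 0 < pγ := by rw [hpγ]; positivity
  have hpγ1 : pγ < 1 := by
    rw [hpγ, div_lt_one hS]; linarith
  have hqγ : 1 - pγ = (1 - P) ^ (1/γ) / S := by
    rw [hpγ]; field_simp; rw [hSdef]; ring
  have hcα : 0 < c ^ (1 - γ) := rpow_pos_of_pos hc _
  -- value of weighted power sum at pγ
  have hval1 : P * pγ ^ (1 - γ) = P ^ (1/γ) * S ^ (γ - 1) := by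
    rw [hpγ, w_x0 hP0 hS hγ.ne' (1 - γ)]
    rw [show 1 + (1-γ)/γ = 1/γ by field_simp; ring, show -(1-γ) = γ-1 by ring]
  have hval2 : (1 - P) * (1 - pγ) ^ (1 - γ) = (1 - P) ^ (1/γ) * S ^ (γ - 1) := by
    rw [hqγ, w_x0 hQ0 hS hγ.ne' (1 - γ)]
    rw [show 1 + (1-γ)/γ = 1/γ by field_simp; ring, show -(1-γ) = γ-1 by ring]
  have hgval : P * pγ ^ (1 - γ) + (1 - P) * (1 - pγ) ^ (1 - γ) = S ^ γ := by
    rw [hval1, hval2, ← add_mul, ← hSdef]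
    rw [show S * S ^ (γ-1) = S ^ (1:ℝ) * S ^ (γ-1) by rw [rpow_one], ← rpow_add hS]
    ring_nf
  -- derivative weights: P * pγ^(-γ) = S^γ = (1-P) * (1-pγ)^(-γ)
  have hder1 : P * pγ ^ ((1 - γ) - 1) = S ^ γ := by
    rw [show (1-γ)-1 = -γ by ring, hpγ, w_x0 hP0 hS hγ.ne' (-γ)]
    rw [show 1 + -γ/γ = (0:ℝ) by field_simp; ring, rpow_zero, neg_neg, one_mul]
  have hder2 : (1 - P) * (1 - pγ) ^ ((1 - γ) - 1) = S ^ γ := by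
    rw [show (1-γ)-1 = -γ by ring, hqγ, w_x0 hQ0 hS hγ.ne' (-γ)]
    rw [show 1 + -γ/γ = (0:ℝ) by field_simp; ring, rpow_zero, neg_neg, one_mul]
  -- representation of the objective
  have hrepr : ∀ p : ℝ, 0 < p → p < 1 →
      P * u (p * c) + (1 - P) * u ((1 - p) * c)
        = (c ^ (1-γ) * (P * p ^ (1-γ) + (1 - P) * (1 - p) ^ (1-γ)) - 1) / (1 - γ) := by
    intro p hp0 hp1
    rw [hu, hu, mul_rpow hp0.le hc.le, mul_rpow (by linarith : (0:ℝ) ≤ 1 - p) hc.le]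
    field_simp
    ring
  refine ⟨⟨hpγ0, hpγ1⟩, ?_, ?_⟩
  · intro p' hp' hne
    obtain ⟨hp0, hp1⟩ := hp'
    have hq0 : 0 < 1 - p' := by linarith
    have hneq : 1 - p' ≠ 1 - pγ := fun h => hne (by linarith)
    rw [hrepr p' hp0 hp1, hrepr pγ hpγ0 hpγ1]
    rcases lt_or_gt_of_ne hγ1 with hlt | hgt
    · -- γ < 1 : exponent 1-γ ∈ (0,1), concave, tangent above
      have h0 : 0 < 1 - γ := by linarith
      have t1 := tangent_lt hp0 hpγ0 hne h0 (by linarith)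
      have t2 := tangent_lt hq0 (by linarith : (0:ℝ) < 1 - pγ) hneq h0 (by linarith)
      have hRHS : P * (pγ ^ (1-γ) + (1-γ) * pγ ^ ((1-γ)-1) * (p' - pγ))
          + (1 - P) * ((1-pγ) ^ (1-γ)
              + (1-γ) * (1-pγ) ^ ((1-γ)-1) * ((1 - p') - (1 - pγ))) = S ^ γ := by
        linear_combination hgval + (1-γ) * (p' - pγ) * hder1
          + (1-γ) * ((1 - p') - (1 - pγ)) * hder2
      have hsum : P * p' ^ (1-γ) + (1 - P) * (1 - p') ^ (1-γ) < S ^ γ := by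
        calc P * p' ^ (1-γ) + (1 - P) * (1 - p') ^ (1-γ)
            < P * (pγ ^ (1-γ) + (1-γ) * pγ ^ ((1-γ)-1) * (p' - pγ))
              + (1 - P) * ((1-pγ) ^ (1-γ)
                + (1-γ) * (1-pγ) ^ ((1-γ)-1) * ((1 - p') - (1 - pγ))) :=
              add_lt_add (mul_lt_mul_of_pos_left t1 hP0) (mul_lt_mul_of_pos_left t2 hQ0)
          _ = S ^ γ := hRHS
      rw [div_lt_div_iff_of_pos_right h0, hgval]
      have := mul_lt_mul_of_pos_left hsum hcα
      linarith
    · -- γ > 1 : exponent 1-γ < 0, convex, tangent below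
      have h0 : 1 - γ < 0 := by linarith
      have t1 := tangent_gt hp0 hpγ0 hne h0
      have t2 := tangent_gt hq0 (by linarith : (0:ℝ) < 1 - pγ) hneq h0
      have hRHS : P * (pγ ^ (1-γ) + (1-γ) * pγ ^ ((1-γ)-1) * (p' - pγ))
          + (1 - P) * ((1-pγ) ^ (1-γ)
              + (1-γ) * (1-pγ) ^ ((1-γ)-1) * ((1 - p') - (1 - pγ))) = S ^ γ := by
        linear_combination hgval + (1-γ) * (p' - pγ) * hder1
          + (1-γ) * ((1 - p') - (1 - pγ)) * hder2
      have hsum : S ^ γ < P * p' ^ (1-γ) + (1 - P) * (1 - p') ^ (1-γ) := by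
        calc S ^ γ
            = P * (pγ ^ (1-γ) + (1-γ) * pγ ^ ((1-γ)-1) * (p' - pγ))
              + (1 - P) * ((1-pγ) ^ (1-γ)
                + (1-γ) * (1-pγ) ^ ((1-γ)-1) * ((1 - p') - (1 - pγ))) := hRHS.symm
          _ < P * p' ^ (1-γ) + (1 - P) * (1 - p') ^ (1-γ) :=
              add_lt_add (mul_lt_mul_of_pos_left t1 hP0) (mul_lt_mul_of_pos_left t2 hQ0)
      rw [div_lt_div_right_of_neg h0, hgval]
      have := mul_lt_mul_of_pos_left hsum hcα
      linarith
  · rw [hrepr pγ hpγ0 hpγ1, hgval]
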